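/- Let d ≥ 2 be an integer, let E be the d-dimensional real Euclidean space, let f : E → ℝ be a bounded continuous function, and let δ > 0. Define the smoothed function f̂(x) as the average of f over the closed ball of radius δ centered at x with respect to Lebesgue measure. Then f̂ is differentiable at every x ∈ E and its gradient satisfies ∇f̂(x) = (d/δ) · E_{λ}[ f(x + δλ) · λ ], where the expectation is taken with respect to the uniform probability measure on the unit sphere of E. -/

import Mathlib

open MeasureTheory Set Metric Measure

noncomputable section

variable {E : Type*} [NormedAddCommGroup E] [NormedSpace ℝ E] [MeasurableSpace E]
  [BorelSpace E] [FiniteDimensional ℝ E] [Nontrivial E] (μ : Measure E) [μ.IsAddHaarMeasure]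

local notation "dim" => Module.finrank ℝ

lemma aux_comp_eq (G : E → ℝ) :
    ((fun p : sphere (0:E) 1 × Ioi (0:ℝ) => G (p.2.1 • p.1.1)) ∘
      (homeomorphUnitSphereProd E)) = (fun z : ({0}ᶜ : Set E) => G z.1) := by
  funext z
  have := (homeomorphUnitSphereProd E).symm_apply_apply z
  have h2 := congrArg Subtype.val this
  rw [homeomorphUnitSphereProd_symm_apply_coe] at h2
  simpa [Function.comp] using congrArg G h2

lemma aux_integrable_comap (G : E → ℝ) (hG : Integrable G μ) :
    Integrable (fun z : ({0}ᶜ : Set E) => G z.1) (μ.comap Subtype.val) := by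
  have hemb : MeasurableEmbedding (Subtype.val : ({0}ᶜ : Set E) → E) :=
    MeasurableEmbedding.subtype_coe (measurableSet_singleton (0:E)).compl
  rw [show (fun z : ({0}ᶜ : Set E) => G z.1) = G ∘ Subtype.val from rfl, hemb.integrable_map_iff.symm]
  rw [hemb.map_comap]
  simpa [Subtype.range_coe] using hG.restrict

lemma aux_integrable_prod (G : E → ℝ) (hG : Integrable G μ) :
    Integrable (fun p : sphere (0:E) 1 × Ioi (0:ℝ) => G (p.2.1 • p.1.1))
      (μ.toSphere.prod (Measure.volumeIoiPow (dim E - 1))) := by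
  rw [← MeasurePreserving.integrable_comp_emb
      (μ.measurePreserving_homeomorphUnitSphereProd)
      (Homeomorph.measurableEmbedding _), aux_comp_eq]
  exact aux_integrable_comap μ G hG

end

noncomputable section
open MeasureTheory Set Metric Measure

lemma aux_nu_integral (n : ℕ) (k : ℝ → ℝ) :
    ∫ r : Ioi (0:ℝ), k r ∂(Measure.volumeIoiPow n) = ∫ r in Ioi (0:ℝ), r ^ n * k r := by
  simp only [Measure.volumeIoiPow, ENNReal.ofReal]
  rw [integral_withDensity_eq_integral_smul
      ((measurable_subtype_coe.pow_const _).real_toNNReal),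
    integral_subtype_comap measurableSet_Ioi (fun a => Real.toNNReal (a ^ n) • k a)]
  refine setIntegral_congr_fun measurableSet_Ioi fun x hx => ?_
  rw [NNReal.smul_def, Real.coe_toNNReal _ (pow_nonneg hx.out.le _), smul_eq_mul]

variable {E : Type*} [NormedAddCommGroup E] [NormedSpace ℝ E] [MeasurableSpace E]
  [BorelSpace E] [FiniteDimensional ℝ E] [Nontrivial E] (μ : Measure E) [μ.IsAddHaarMeasure]

local notation "dim" => Module.finrank ℝ

lemma aux_polar (G : E → ℝ) (hG : Integrable G μ) :
    ∫ z, G z ∂μ = ∫ v : sphere (0:E) 1,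
      (∫ r in Ioi (0:ℝ), r ^ (dim E - 1) * G (r • (v:E))) ∂μ.toSphere := by
  have h0 : ∫ z, G z ∂μ = ∫ z in ({0}ᶜ : Set E), G z ∂μ := by
    rw [restrict_compl_singleton]
  rw [h0, ← integral_subtype_comap (measurableSet_singleton (0:E)).compl (fun z => G z)]
  have := (μ.measurePreserving_homeomorphUnitSphereProd).integral_comp
    (Homeomorph.measurableEmbedding _)
    (fun p : sphere (0:E) 1 × Ioi (0:ℝ) => G (p.2.1 • p.1.1))
  have hpt : (fun z : ({0}ᶜ : Set E) => G z.1) = (fun z : ({0}ᶜ : Set E) =>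
      G ((((homeomorphUnitSphereProd E) z).2 : ℝ) • (((homeomorphUnitSphereProd E) z).1 : E))) := by
    funext z
    exact (congrFun (aux_comp_eq G) z).symm
  rw [hpt, this]
  rw [MeasureTheory.integral_prod _ (aux_integrable_prod μ G hG)]
  refine integral_congr_ae (Filter.Eventually.of_forall fun v => ?_)
  simpa using aux_nu_integral (dim E - 1) (fun r => G (r • (v:E)))

lemma aux_polar_integrable (G : E → ℝ) (hG : Integrable G μ) :
    Integrable (fun v : sphere (0:E) 1 =>
      ∫ r in Ioi (0:ℝ), r ^ (dim E - 1) * G (r • (v:E))) μ.toSphere := by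
  have := (aux_integrable_prod μ G hG).integral_prod_left
  refine this.congr (Filter.Eventually.of_forall fun v => ?_)
  simpa using aux_nu_integral (dim E - 1) (fun r => G (r • (v:E)))

end

open MeasureTheory Set Metric Measure

noncomputable section

variable {E : Type*} [NormedAddCommGroup E] [InnerProductSpace ℝ E]

local notation "⟪" x ", " y "⟫" => @inner ℝ _ _ x y

/-- the radius at which the ray `r • v` exits the ball `B(h, δ)` -/
def rad (δ : ℝ) (v h : E) : ℝ := ⟪v, h⟫ + Real.sqrt (δ^2 - ‖h‖^2 + ⟪v, h⟫^2)

lemma sqrtA_facts {δ : ℝ} (hδ : 0 < δ) {v h : E} (hv : ‖v‖ = 1) (hh : ‖h‖ ≤ δ) :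
    |⟪v, h⟫| ≤ Real.sqrt (δ^2 - ‖h‖^2 + ⟪v, h⟫^2) ∧
    Real.sqrt (δ^2 - ‖h‖^2 + ⟪v, h⟫^2) ≤ δ := by
  have h1 : |⟪v, h⟫| ≤ ‖h‖ := by simpa [hv] using abs_real_inner_le_norm v h
  have hA : (0:ℝ) ≤ δ^2 - ‖h‖^2 + ⟪v, h⟫^2 := by
    nlinarith [norm_nonneg h, sq_nonneg ⟪v, h⟫]
  constructor
  · rw [show |⟪v, h⟫| = Real.sqrt (⟪v, h⟫^2) by rw [Real.sqrt_sq_eq_abs]]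
    apply Real.sqrt_le_sqrt
    nlinarith [norm_nonneg h]
  · calc Real.sqrt (δ^2 - ‖h‖^2 + ⟪v, h⟫^2) ≤ Real.sqrt (δ^2) :=
        Real.sqrt_le_sqrt (by nlinarith [abs_nonneg ⟪v, h⟫, sq_abs ⟪v, h⟫, norm_nonneg h])
      _ = δ := Real.sqrt_sq hδ.le

lemma rad_nonneg {δ : ℝ} (hδ : 0 < δ) {v h : E} (hv : ‖v‖ = 1) (hh : ‖h‖ ≤ δ) :
    0 ≤ rad δ v h := by
  have := (sqrtA_facts hδ hv hh).1
  have h2 := neg_abs_le ⟪v, h⟫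
  rw [rad]; linarith

lemma rad_le {δ : ℝ} (hδ : 0 < δ) {v h : E} (hv : ‖v‖ = 1) (hh : ‖h‖ ≤ δ) :
    rad δ v h ≤ δ + ‖h‖ := by
  have := (sqrtA_facts hδ hv hh).2
  have h1 : |⟪v, h⟫| ≤ ‖h‖ := by simpa [hv] using abs_real_inner_le_norm v h
  have := le_abs_self ⟪v, h⟫
  rw [rad]; linarith

lemma rad_sub_le {δ : ℝ} (hδ : 0 < δ) {v h : E} (hv : ‖v‖ = 1) (hh : ‖h‖ ≤ δ) :
    |rad δ v h - δ - ⟪v, h⟫| ≤ ‖h‖^2 / δ := by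
  have h1 : |⟪v, h⟫| ≤ ‖h‖ := by simpa [hv] using abs_real_inner_le_norm v h
  have hA : (0:ℝ) ≤ δ^2 - ‖h‖^2 + ⟪v, h⟫^2 := by
    nlinarith [norm_nonneg h, sq_nonneg ⟪v, h⟫]
  set sA := Real.sqrt (δ^2 - ‖h‖^2 + ⟪v, h⟫^2) with hsA_def
  have hsA : 0 ≤ sA := Real.sqrt_nonneg _
  have hsA2 : sA^2 = δ^2 - ‖h‖^2 + ⟪v, h⟫^2 := Real.sq_sqrt hA
  have h2 := (sqrtA_facts hδ hv hh).2
  rw [rad, ← hsA_def, show ⟪v, h⟫ + sA - δ - ⟪v, h⟫ = sA - δ from by ring, abs_le]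
  constructor
  · have key : δ * (δ - sA) ≤ ‖h‖^2 := by nlinarith [sq_nonneg ⟪v, h⟫]
    rw [neg_le, neg_sub, ← sub_nonneg]
    have heq : ‖h‖^2/δ - (δ - sA) = (‖h‖^2 - δ*(δ - sA))/δ := by field_simp
    rw [heq]
    apply div_nonneg _ hδ.le
    linarith
  · have h3 : sA - δ ≤ 0 := by linarith
    have h4 : (0:ℝ) ≤ ‖h‖^2 / δ := div_nonneg (sq_nonneg _) hδ.le
    linarith

lemma rad_dist {δ : ℝ} (hδ : 0 < δ) {v h : E} (hv : ‖v‖ = 1) (hh : ‖h‖ ≤ δ) :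
    |rad δ v h - δ| ≤ ‖h‖ + ‖h‖^2 / δ := by
  have h1 : |⟪v, h⟫| ≤ ‖h‖ := by simpa [hv] using abs_real_inner_le_norm v h
  have h2 := rad_sub_le hδ hv hh
  calc |rad δ v h - δ| = |(rad δ v h - δ - ⟪v, h⟫) + ⟪v, h⟫| := by ring_nf
    _ ≤ |rad δ v h - δ - ⟪v, h⟫| + |⟪v, h⟫| := abs_add_le _ _
    _ ≤ ‖h‖^2/δ + ‖h‖ := add_le_add h2 h1
    _ = ‖h‖ + ‖h‖^2/δ := by ring

lemma rad_mem_iff {δ : ℝ} (hδ : 0 < δ) {v h : E} (hv : ‖v‖ = 1) (hh : ‖h‖ ≤ δ)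
    {r : ℝ} (hr : 0 < r) : ‖r • v - h‖ ≤ δ ↔ r ≤ rad δ v h := by
  have h1 : |⟪v, h⟫| ≤ ‖h‖ := by simpa [hv] using abs_real_inner_le_norm v h
  have hA : (0:ℝ) ≤ δ^2 - ‖h‖^2 + ⟪v, h⟫^2 := by
    nlinarith [norm_nonneg h, sq_nonneg ⟪v, h⟫]
  set sA := Real.sqrt (δ^2 - ‖h‖^2 + ⟪v, h⟫^2) with hsA_def
  have hsA : 0 ≤ sA := Real.sqrt_nonneg _
  have hsA2 : sA^2 = δ^2 - ‖h‖^2 + ⟪v, h⟫^2 := Real.sq_sqrt hA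
  have h3 : |⟪v, h⟫| ≤ sA := (sqrtA_facts hδ hv hh).1
  have hnorm : ‖r • v - h‖^2 = r^2 - 2*r*⟪v, h⟫ + ‖h‖^2 := by
    rw [norm_sub_sq_real, norm_smul, real_inner_smul_left]
    simp [hv, abs_of_pos hr]
    ring
  rw [rad, ← hsA_def]
  constructor
  · intro hle
    have h2 : ‖r • v - h‖^2 ≤ δ^2 := by nlinarith [norm_nonneg (r • v - h)]
    rw [hnorm] at h2
    have hsq : (r - ⟪v, h⟫)^2 ≤ sA^2 := by nlinarith
    have := (abs_le_of_sq_le_sq' hsq hsA).2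
    linarith
  · intro hle
    have k1 : 0 ≤ sA - (r - ⟪v, h⟫) := by linarith
    have k2 : 0 ≤ sA + (r - ⟪v, h⟫) := by
      have := le_abs_self ⟪v, h⟫
      linarith
    have hsq : (r - ⟪v, h⟫)^2 ≤ sA^2 := by nlinarith [mul_nonneg k1 k2]
    have h2 : ‖r • v - h‖^2 ≤ δ^2 := by rw [hnorm]; nlinarith
    nlinarith [norm_nonneg (r • v - h), hδ.le]

end

noncomputable section
open MeasureTheory Set Metric Measure

variable {E : Type*} [NormedAddCommGroup E] [InnerProductSpace ℝ E] [MeasurableSpace E]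
  [BorelSpace E] [FiniteDimensional ℝ E] [Nontrivial E] (μ : Measure E) [μ.IsAddHaarMeasure]

local notation "dim" => Module.finrank ℝ
local notation "⟪" x ", " y "⟫" => @inner ℝ _ _ x y

variable {δ : ℝ} (f : E → ℝ) (x : E)

/-- the indicator integrand -/
def GG (f : E → ℝ) (x : E) (δ : ℝ) (h : E) : E → ℝ :=
  Set.indicator (closedBall h δ) (fun z => f (x + z))

lemma GG_integrable (hf : Continuous f) {δ : ℝ} (h : E) : Integrable (GG f x δ h) μ := by
  apply (IntegrableOn.integrable_indicator _ measurableSet_closedBall)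
  exact ((hf.comp (continuous_const.add continuous_id)).continuousOn).integrableOn_compact
    (isCompact_closedBall _ _)

lemma ball_eq_GG {δ : ℝ} (h : E) : ∫ y in closedBall (x + h) δ, f y ∂μ = ∫ z, GG f x δ h z ∂μ := by
  rw [← integral_indicator measurableSet_closedBall]
  rw [← integral_add_left_eq_self (μ := μ) (fun y => Set.indicator (closedBall (x + h) δ) f y) x]
  congr 1
  funext z
  rw [GG]
  by_cases hz : z ∈ closedBall h δ
  · rw [Set.indicator_of_mem hz, Set.indicator_of_mem]
    simpa [mem_closedBall, dist_eq_norm, add_sub_add_left_eq_sub] using hz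
  · rw [Set.indicator_of_notMem hz, Set.indicator_of_notMem]
    simpa [mem_closedBall, dist_eq_norm, add_sub_add_left_eq_sub] using hz

lemma GG_inner_integral (hδ : 0 < δ) (h : E) (hh : ‖h‖ ≤ δ) (v : sphere (0:E) 1) :
    ∫ r in Ioi (0:ℝ), r ^ (dim E - 1) * GG f x δ h (r • (v:E))
      = ∫ r in (0:ℝ)..(rad δ (v:E) h), r ^ (dim E - 1) * f (x + r • (v:E)) := by
  have hv : ‖(v:E)‖ = 1 := by simpa using mem_sphere_zero_iff_norm.1 v.2
  have hpt : ∀ r : ℝ, r ^ (dim E - 1) * GG f x δ h (r • (v:E)) =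
      Set.indicator {r : ℝ | ‖r • (v:E) - h‖ ≤ δ}
        (fun r => r ^ (dim E - 1) * f (x + r • (v:E))) r := by
    intro r
    rw [GG]
    by_cases hr : ‖r • (v:E) - h‖ ≤ δ
    · rw [Set.indicator_of_mem
        (show r • (v:E) ∈ closedBall h δ by simpa [mem_closedBall, dist_eq_norm] using hr),
        Set.indicator_of_mem (show r ∈ {r : ℝ | ‖r • (v:E) - h‖ ≤ δ} from hr)]
    · rw [Set.indicator_of_notMem
        (show r • (v:E) ∉ closedBall h δ by simpa [mem_closedBall, dist_eq_norm] using hr),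
        Set.indicator_of_notMem (show r ∉ {r : ℝ | ‖r • (v:E) - h‖ ≤ δ} from hr), mul_zero]
  simp_rw [hpt]
  have hTmeas : MeasurableSet {r : ℝ | ‖r • (v:E) - h‖ ≤ δ} := by
    apply measurableSet_le _ measurable_const
    exact (continuous_id.smul continuous_const |>.sub continuous_const).norm.measurable
  rw [integral_indicator hTmeas, Measure.restrict_restrict hTmeas]
  have hset : {r : ℝ | ‖r • (v:E) - h‖ ≤ δ} ∩ Ioi 0 = Ioc 0 (rad δ (v:E) h) := by
    ext r
    simp only [Set.mem_inter_iff, Set.mem_setOf_eq, mem_Ioi, mem_Ioc]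
    constructor
    · rintro ⟨h1, h2⟩
      exact ⟨h2, (rad_mem_iff hδ hv hh h2).1 h1⟩
    · rintro ⟨h1, h2⟩
      exact ⟨(rad_mem_iff hδ hv hh h1).2 h2, h1⟩
  rw [hset, ← intervalIntegral.integral_of_le (rad_nonneg hδ hv hh)]

lemma ball_integral (hδ : 0 < δ) (hf : Continuous f) (h : E) (hh : ‖h‖ ≤ δ) :
    ∫ y in closedBall (x + h) δ, f y ∂μ =
      ∫ v : sphere (0:E) 1,
        (∫ r in (0:ℝ)..(rad δ (v:E) h), r ^ (dim E - 1) * f (x + r • (v:E))) ∂μ.toSphere := by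
  rw [ball_eq_GG μ f x h, aux_polar μ _ (GG_integrable μ f x hf h)]
  exact integral_congr_ae (Filter.Eventually.of_forall fun v =>
    GG_inner_integral f x hδ h hh v)

lemma ball_integrable (hδ : 0 < δ) (hf : Continuous f) (h : E) (hh : ‖h‖ ≤ δ) :
    Integrable (fun v : sphere (0:E) 1 =>
      ∫ r in (0:ℝ)..(rad δ (v:E) h), r ^ (dim E - 1) * f (x + r • (v:E))) μ.toSphere := by
  refine (aux_polar_integrable μ _ (GG_integrable μ f x hf h)).congr
    (Filter.Eventually.of_forall fun v => GG_inner_integral f x hδ h hh v)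

end

noncomputable section
open MeasureTheory Set Metric Measure intervalIntegral

lemma pow_diff_bound (n : ℕ) {a b C : ℝ} (ha : 0 ≤ a) (haC : a ≤ C) (hb : 0 ≤ b) (hbC : b ≤ C) :
    |a^n - b^n| ≤ n * C^(n-1) * |a - b| := by
  induction n with
  | zero => simp
  | succ n ih =>
    have hC : 0 ≤ C := le_trans ha haC
    have key : a^(n+1) - b^(n+1) = a * (a^n - b^n) + (a - b) * b^n := by ring
    have h1 : |a * (a^n - b^n)| ≤ C * (n * C^(n-1) * |a - b|) := by
      rw [abs_mul, abs_of_nonneg ha]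
      exact mul_le_mul haC ih (abs_nonneg _) hC
    have h2 : |(a - b) * b^n| ≤ |a - b| * C^n := by
      rw [abs_mul, abs_of_nonneg (pow_nonneg hb n)]
      exact mul_le_mul_of_nonneg_left (pow_le_pow_left₀ hb hbC n) (abs_nonneg _)
    have h3 : (n:ℝ) * C^(n-1) * C ≤ n * C^n := by
      cases n with
      | zero => simp
      | succ m =>
        rw [Nat.succ_sub_one]
        exact le_of_eq (by rw [pow_succ]; ring)
    calc |a^(n+1) - b^(n+1)| ≤ |a * (a^n - b^n)| + |(a - b) * b^n| := by
          rw [key]; exact abs_add_le _ _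
      _ ≤ C * (n * C^(n-1) * |a - b|) + |a - b| * C^n := add_le_add h1 h2
      _ ≤ (n+1) * C^((n+1)-1) * |a - b| := by
          rw [Nat.add_sub_cancel]
          nlinarith [abs_nonneg (a - b), h3]
      _ = (↑(n+1) : ℝ) * C^((n+1)-1) * |a - b| := by push_cast; ring

variable {E : Type*} [NormedAddCommGroup E] [InnerProductSpace ℝ E] [FiniteDimensional ℝ E]

local notation "⟪" x ", " y "⟫" => @inner ℝ _ _ x y

set_option maxHeartbeats 1000000 in
lemma e_bound {δ : ℝ} (hδ : 0 < δ) {f : E → ℝ} (hf : Continuous f) {M : ℝ}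
    (hM : ∀ z, |f z| ≤ M) (x : E) (n : ℕ) {ε : ℝ} (hε : 0 < ε) :
    ∃ η > 0, ∀ h : E, ‖h‖ < η → ∀ v : E, ‖v‖ = 1 →
      |(∫ r in δ..(rad δ v h), r^n * f (x + r • v)) - δ^n * f (x + δ • v) * ⟪v, h⟫|
        ≤ ε * ‖h‖ := by
  have hM0 : 0 ≤ M := le_trans (abs_nonneg _) (hM x)
  set C1 : ℝ := (2*δ)^n with hC1
  set C2 : ℝ := M * n * (2*δ)^(n-1) with hC2
  set C3 : ℝ := M * δ^n / δ with hC3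
  have hC1pos : 0 < C1 := pow_pos (by linarith) n
  have hC2n : 0 ≤ C2 := by positivity
  have hC3n : 0 ≤ C3 := by positivity
  set ε₁ : ℝ := ε / (4*C1 + 1) with hε₁
  have hε₁pos : 0 < ε₁ := by positivity
  -- uniform continuity on the closed ball of radius 2δ
  obtain ⟨η₀, hη₀pos, hη₀⟩ := (Metric.uniformContinuousOn_iff.1
    ((isCompact_closedBall x (2*δ)).uniformContinuousOn_of_continuous hf.continuousOn)) ε₁ hε₁pos
  refine ⟨min (min (η₀/2) δ) ((ε/2)/(4*C2 + C3 + 1)), by positivity, fun h hh v hv => ?_⟩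
  have hh1 : ‖h‖ < η₀/2 := lt_of_lt_of_le hh (le_trans (min_le_left _ _) (min_le_left _ _))
  have hh2 : ‖h‖ ≤ δ := le_of_lt (lt_of_lt_of_le hh (le_trans (min_le_left _ _) (min_le_right _ _)))
  have hh3 : ‖h‖ < (ε/2)/(4*C2 + C3 + 1) := lt_of_lt_of_le hh (min_le_right _ _)
  have hh0 : 0 ≤ ‖h‖ := norm_nonneg _
  set ρ : ℝ := rad δ v h with hρ
  have hρ0 : 0 ≤ ρ := rad_nonneg hδ hv hh2
  have hρδ : |ρ - δ| ≤ 2 * ‖h‖ := by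
    have := rad_dist hδ hv hh2
    have h2 : ‖h‖^2/δ ≤ ‖h‖ := by
      rw [div_le_iff₀ hδ]
      nlinarith
    linarith
  have hρ2δ : ρ ≤ 2*δ := by
    have := rad_le hδ hv hh2
    linarith
  -- decomposition
  have hcont1 : Continuous fun r : ℝ => r^n * f (x + r • v) :=
    (continuous_pow n).mul (hf.comp (continuous_const.add (continuous_id.smul continuous_const)))
  have hidable : IntervalIntegrable (fun r : ℝ => r^n * f (x + r • v)) volume δ ρ :=
    hcont1.intervalIntegrable _ _
  have hdecomp : (∫ r in δ..ρ, r^n * f (x + r • v)) - δ^n * f (x + δ • v) * ⟪v, h⟫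
      = (∫ r in δ..ρ, (r^n * f (x + r • v) - δ^n * f (x + δ • v)))
        + δ^n * f (x + δ • v) * (ρ - δ - ⟪v, h⟫) := by
    rw [intervalIntegral.integral_sub hidable (intervalIntegrable_const)]
    rw [intervalIntegral.integral_const]
    ring_nf
  rw [hdecomp]
  -- bound on T1
  have hT1 : |∫ r in δ..ρ, (r^n * f (x + r • v) - δ^n * f (x + δ • v))|
      ≤ (C1 * ε₁ + C2 * (2*‖h‖)) * |ρ - δ| := by
    rw [← Real.norm_eq_abs]
    apply intervalIntegral.norm_integral_le_of_norm_le_const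
    intro r hr
    have hr1 : min δ ρ < r := hr.1
    have hr2 : r ≤ max δ ρ := hr.2
    have hr0 : 0 < r := lt_of_le_of_lt (le_min hδ.le hρ0) hr1
    have hr2δ : r ≤ 2*δ := le_trans hr2 (max_le (by linarith) hρ2δ)
    have hrd : |r - δ| ≤ |ρ - δ| := by
      rcases le_total δ ρ with hc | hc
      · rw [min_eq_left hc] at hr1
        rw [max_eq_right hc] at hr2
        rw [abs_of_nonneg (by linarith), abs_of_nonneg (by linarith)]
        linarith
      · rw [min_eq_right hc] at hr1
        rw [max_eq_left hc] at hr2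
        rw [abs_of_nonpos (by linarith), abs_of_nonpos (by linarith)]
        linarith
    have hrh : |r - δ| < η₀ := lt_of_le_of_lt (le_trans hrd hρδ) (by linarith)
    have hmem1 : x + r • v ∈ closedBall x (2*δ) := by
      rw [mem_closedBall, dist_eq_norm, add_sub_cancel_left, norm_smul, hv]
      rw [Real.norm_eq_abs, abs_of_pos hr0]
      simpa using hr2δ
    have hmem2 : x + δ • v ∈ closedBall x (2*δ) := by
      rw [mem_closedBall, dist_eq_norm, add_sub_cancel_left, norm_smul, hv]
      rw [Real.norm_eq_abs, abs_of_pos hδ]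
      simp; linarith
    have hdist : dist (x + r • v) (x + δ • v) < η₀ := by
      rw [dist_eq_norm, show (x + r • v) - (x + δ • v) = (r - δ) • v from by
        rw [sub_smul]; abel, norm_smul, hv, Real.norm_eq_abs]
      simpa using hrh
    have hfd : |f (x + r • v) - f (x + δ • v)| < ε₁ := by
      have := hη₀ _ hmem1 _ hmem2 hdist
      rwa [Real.dist_eq] at this
    have hpd : |r^n - δ^n| ≤ n * (2*δ)^(n-1) * (2*‖h‖) := by
      calc |r^n - δ^n| ≤ n * (2*δ)^(n-1) * |r - δ| :=
            pow_diff_bound n hr0.le hr2δ hδ.le (by linarith)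
        _ ≤ n * (2*δ)^(n-1) * (2*‖h‖) := by
            apply mul_le_mul_of_nonneg_left (le_trans hrd hρδ)
            positivity
    calc ‖r^n * f (x + r • v) - δ^n * f (x + δ • v)‖
        = |r^n * (f (x + r • v) - f (x + δ • v)) + (r^n - δ^n) * f (x + δ • v)| := by
          rw [Real.norm_eq_abs]; ring_nf
      _ ≤ |r^n * (f (x + r • v) - f (x + δ • v))| + |(r^n - δ^n) * f (x + δ • v)| := abs_add_le _ _
      _ ≤ C1 * ε₁ + C2 * (2*‖h‖) := by
          rw [abs_mul, abs_mul]
          apply add_le_add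
          · apply mul_le_mul _ hfd.le (abs_nonneg _) hC1pos.le
            rw [abs_of_nonneg (pow_nonneg hr0.le n)]
            exact pow_le_pow_left₀ hr0.le hr2δ n
          · calc |r^n - δ^n| * |f (x + δ • v)| ≤ (n * (2*δ)^(n-1) * (2*‖h‖)) * M :=
                mul_le_mul hpd (hM _) (abs_nonneg _) (by positivity)
              _ = C2 * (2*‖h‖) := by rw [hC2]; ring
  -- bound on T2
  have hT2 : |δ^n * f (x + δ • v) * (ρ - δ - ⟪v, h⟫)| ≤ C3 * ‖h‖^2 := by
    rw [abs_mul, abs_mul]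
    calc |δ^n| * |f (x + δ • v)| * |ρ - δ - ⟪v, h⟫| ≤ δ^n * M * (‖h‖^2/δ) := by
          apply mul_le_mul _ (rad_sub_le hδ hv hh2) (abs_nonneg _) (by positivity)
          rw [abs_of_nonneg (pow_nonneg hδ.le n)]
          exact mul_le_mul_of_nonneg_left (hM _) (pow_nonneg hδ.le n)
      _ = C3 * ‖h‖^2 := by rw [hC3]; ring
  -- combine
  have hfinal1 : 2 * C1 * ε₁ ≤ ε/2 := by
    rw [hε₁]
    rw [show 2 * C1 * (ε / (4 * C1 + 1)) = (2 * C1 * ε) / (4 * C1 + 1) from by ring]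
    rw [div_le_iff₀ (by positivity)]
    nlinarith
  have hfinal2 : (4*C2 + C3) * ‖h‖ ≤ ε/2 := by
    rcases eq_or_lt_of_le (by positivity : (0:ℝ) ≤ 4*C2 + C3) with hz | hz
    · rw [← hz]; simp; positivity
    · calc (4*C2 + C3) * ‖h‖ ≤ (4*C2 + C3) * ((ε/2)/(4*C2 + C3 + 1)) := by
            apply mul_le_mul_of_nonneg_left hh3.le (by positivity)
        _ ≤ ε/2 := by
            rw [show (4*C2 + C3) * ((ε/2)/(4*C2 + C3 + 1)) = ((4*C2 + C3) * (ε/2))/(4*C2 + C3 + 1) from by ring]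
            rw [div_le_iff₀ (by positivity)]
            nlinarith
  calc |(∫ r in δ..ρ, (r^n * f (x + r • v) - δ^n * f (x + δ • v)))
        + δ^n * f (x + δ • v) * (ρ - δ - ⟪v, h⟫)|
      ≤ |∫ r in δ..ρ, (r^n * f (x + r • v) - δ^n * f (x + δ • v))|
        + |δ^n * f (x + δ • v) * (ρ - δ - ⟪v, h⟫)| := abs_add_le _ _
    _ ≤ (C1 * ε₁ + C2 * (2*‖h‖)) * (2*‖h‖) + C3 * ‖h‖^2 := by
        apply add_le_add _ hT2
        calc |∫ r in δ..ρ, (r^n * f (x + r • v) - δ^n * f (x + δ • v))|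
            ≤ (C1 * ε₁ + C2 * (2*‖h‖)) * |ρ - δ| := hT1
          _ ≤ (C1 * ε₁ + C2 * (2*‖h‖)) * (2*‖h‖) := by
              apply mul_le_mul_of_nonneg_left hρδ
              positivity
    _ = (2 * C1 * ε₁) * ‖h‖ + (4*C2 + C3) * ‖h‖ * ‖h‖ := by ring
    _ ≤ (ε/2) * ‖h‖ + (ε/2) * ‖h‖ := by
        apply add_le_add
        · exact mul_le_mul_of_nonneg_right hfinal1 hh0
        · exact mul_le_mul_of_nonneg_right hfinal2 hh0
    _ = ε * ‖h‖ := by ring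

end

noncomputable section
open MeasureTheory Set Metric Measure intervalIntegral

variable {E : Type*} [NormedAddCommGroup E] [InnerProductSpace ℝ E] [MeasurableSpace E]
  [BorelSpace E] [FiniteDimensional ℝ E] [Nontrivial E] (μ : Measure E) [μ.IsAddHaarMeasure]

local notation "⟪" x ", " y "⟫" => @inner ℝ _ _ x y

lemma rad_zero {δ : ℝ} (hδ : 0 < δ) (v : E) : rad δ v 0 = δ := by
  simp [rad, Real.sqrt_sq hδ.le]

set_option maxHeartbeats 1000000 in
lemma main_aux {f : E → ℝ} (hf : Continuous f) {M : ℝ} (hM : ∀ z, |f z| ≤ M)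
    {δ : ℝ} (hδ : 0 < δ) (x : E) :
    HasGradientAt (fun c => ⨍ y in closedBall c δ, f y ∂μ)
      (((Module.finrank ℝ E : ℝ) / δ) •
        ⨍ v : sphere (0:E) 1, f (x + δ • (v:E)) • (v:E) ∂μ.toSphere) x := by
  set D := Module.finrank ℝ E with hDdef
  have hD : 0 < D := Module.finrank_pos
  obtain ⟨k, hk⟩ : ∃ k, D = k + 1 := ⟨D - 1, (Nat.succ_pred_eq_of_pos hD).symm⟩
  set B := (μ (ball (0:E) 1)).toReal with hBdef
  have hB : 0 < B := ENNReal.toReal_pos (measure_ball_pos μ 0 one_pos).ne' measure_ball_lt_top.ne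
  have hSuniv : (μ.toSphere Set.univ).toReal = D * B := by
    rw [Measure.toSphere_apply_univ, ENNReal.toReal_mul, ENNReal.toReal_natCast]
  have hV : ∀ c : E, (μ (closedBall c δ)).toReal = δ^D * B := fun c => by
    rw [μ.addHaar_closedBall c hδ.le, ENNReal.toReal_mul, ENNReal.toReal_ofReal (by positivity)]
  have havg : ∀ c : E, (⨍ y in closedBall c δ, f y ∂μ)
      = (δ^D * B)⁻¹ * ∫ y in closedBall c δ, f y ∂μ := fun c => by
    rw [setAverage_eq, measureReal_def, hV c, smul_eq_mul]
  have hsphere_cont : Continuous (fun v : sphere (0:E) 1 => f (x + δ • (v:E)) • (v:E)) :=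
    ((hf.comp (continuous_const.add (continuous_subtype_val.const_smul δ))).smul
      continuous_subtype_val)
  have hsphere_int : Integrable (fun v : sphere (0:E) 1 => f (x + δ • (v:E)) • (v:E))
      μ.toSphere :=
    hsphere_cont.integrable_of_hasCompactSupport (HasCompactSupport.of_compactSpace _)
  set w := ∫ v : sphere (0:E) 1, f (x + δ • (v:E)) • (v:E) ∂μ.toSphere with hwdef
  have hgrad_eq : ((D : ℝ)/δ) •
      (⨍ v : sphere (0:E) 1, f (x + δ • (v:E)) • (v:E) ∂μ.toSphere)
      = ((D : ℝ)/δ * ((D : ℝ) * B)⁻¹) • w := by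
    rw [average_eq, measureReal_def, hSuniv, smul_smul]
  rw [hgrad_eq]
  -- the inner product with the candidate gradient
  have hinner : ∀ h : E, ⟪((D : ℝ)/δ * ((D : ℝ) * B)⁻¹) • w, h⟫
      = (δ^D * B)⁻¹ * ∫ v : sphere (0:E) 1,
          (δ^(D-1) * (f (x + δ • (v:E)) * ⟪(v:E), h⟫)) ∂μ.toSphere := by
    intro h
    rw [real_inner_smul_left]
    have h1 : ⟪w, h⟫ = ∫ v : sphere (0:E) 1, f (x + δ • (v:E)) * ⟪(v:E), h⟫ ∂μ.toSphere := by
      rw [real_inner_comm, ← integral_inner hsphere_int h]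
      congr 1
      funext v
      rw [real_inner_smul_right, real_inner_comm]
    rw [h1, ← MeasureTheory.integral_const_mul, ← MeasureTheory.integral_const_mul]
    congr 1
    funext v
    have hcoef : (D : ℝ)/δ * ((D : ℝ) * B)⁻¹ = (δ^D * B)⁻¹ * δ^(D-1) := by
      have hDne : (D : ℝ) ≠ 0 := by positivity
      rw [hk, Nat.succ_sub_one, pow_succ]
      field_simp
    rw [← mul_assoc, ← mul_assoc, hcoef]
    ring
  rw [hasGradientAt_iff_isLittleO_nhds_zero, Asymptotics.isLittleO_iff]
  intro c hc
  set ε₀ : ℝ := c * (δ^D * B) / ((D : ℝ) * B + 1) with hε₀def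
  have hε₀ : 0 < ε₀ := by positivity
  obtain ⟨η, hηpos, hbound⟩ := e_bound hδ hf hM x (D-1) hε₀
  filter_upwards [Metric.ball_mem_nhds (0:E) (lt_min hηpos hδ)] with h hh
  rw [mem_ball_zero_iff, lt_min_iff] at hh
  obtain ⟨hhη, hhδ'⟩ := hh
  have hhδ : ‖h‖ ≤ δ := hhδ'.le
  -- the three sphere integrands
  set Kh : sphere (0:E) 1 → ℝ :=
    fun v => ∫ r in (0:ℝ)..(rad δ (v:E) h), r^(D-1) * f (x + r • (v:E)) with hKh
  set K0 : sphere (0:E) 1 → ℝ :=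
    fun v => ∫ r in (0:ℝ)..δ, r^(D-1) * f (x + r • (v:E)) with hK0
  set lin : sphere (0:E) 1 → ℝ :=
    fun v => δ^(D-1) * (f (x + δ • (v:E)) * ⟪(v:E), h⟫) with hlin
  have hIh : ∫ y in closedBall (x + h) δ, f y ∂μ = ∫ v, Kh v ∂μ.toSphere :=
    ball_integral μ f x hδ hf h hhδ
  have hI0 : ∫ y in closedBall x δ, f y ∂μ = ∫ v, K0 v ∂μ.toSphere := by
    have := ball_integral μ f x hδ hf 0 (by simp [hδ.le])
    rw [add_zero] at this
    rw [this]
    refine integral_congr_ae (Filter.Eventually.of_forall fun v => ?_)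
    simp only [rad_zero hδ, hK0, ← hDdef]
  have hKh_int : Integrable Kh μ.toSphere := ball_integrable μ f x hδ hf h hhδ
  have hK0_int : Integrable K0 μ.toSphere := by
    have := ball_integrable μ f x hδ hf 0 (by simp [hδ.le])
    refine this.congr (Filter.Eventually.of_forall fun v => ?_)
    simp only [rad_zero hδ, hK0, ← hDdef]
  have hlin_int : Integrable lin μ.toSphere := by
    apply Continuous.integrable_of_hasCompactSupport
    · exact continuous_const.mul ((hf.comp (continuous_const.add
        (continuous_subtype_val.const_smul δ))).mul
        (continuous_subtype_val.inner continuous_const))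
    · exact HasCompactSupport.of_compactSpace _
  -- assemble the difference as a single sphere integral
  have hsplit : (⨍ y in closedBall (x+h) δ, f y ∂μ) - (⨍ y in closedBall x δ, f y ∂μ)
      - ⟪((D : ℝ)/δ * ((D : ℝ) * B)⁻¹) • w, h⟫
      = (δ^D * B)⁻¹ * ∫ v, (Kh v - K0 v - lin v) ∂μ.toSphere := by
    rw [havg, havg, hinner h, hIh, hI0]
    have hsub2 : Integrable (fun v => Kh v - K0 v) μ.toSphere := hKh_int.sub hK0_int
    rw [integral_sub hsub2 hlin_int, integral_sub hKh_int hK0_int]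
    ring
  have hptbound : ∀ v : sphere (0:E) 1, ‖Kh v - K0 v - lin v‖ ≤ ε₀ * ‖h‖ := by
    intro v
    have hv : ‖(v:E)‖ = 1 := by simpa using mem_sphere_zero_iff_norm.1 v.2
    have hcont1 : Continuous fun r : ℝ => r^(D-1) * f (x + r • (v:E)) :=
      (continuous_pow _).mul (hf.comp (continuous_const.add
        (continuous_id.smul continuous_const)))
    have hKdiff : Kh v - K0 v
        = ∫ r in δ..(rad δ (v:E) h), r^(D-1) * f (x + r • (v:E)) :=
      intervalIntegral.integral_interval_sub_left (hcont1.intervalIntegrable _ _)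
        (hcont1.intervalIntegrable _ _)
    rw [hKdiff, Real.norm_eq_abs]
    have := hbound h hhη (v:E) hv
    calc |(∫ r in δ..(rad δ (v:E) h), r^(D-1) * f (x + r • (v:E))) - lin v|
        = |(∫ r in δ..(rad δ (v:E) h), r^(D-1) * f (x + r • (v:E)))
            - δ^(D-1) * f (x + δ • (v:E)) * ⟪(v:E), h⟫| := by rw [hlin, mul_assoc]
      _ ≤ ε₀ * ‖h‖ := this
  have hintbound : ‖∫ v, (Kh v - K0 v - lin v) ∂μ.toSphere‖
      ≤ ε₀ * ‖h‖ * (μ.toSphere Set.univ).toReal :=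
    norm_integral_le_of_norm_le_const (Filter.Eventually.of_forall hptbound)
  calc ‖(fun c => ⨍ y in closedBall c δ, f y ∂μ) (x + h)
        - (fun c => ⨍ y in closedBall c δ, f y ∂μ) x
        - ⟪((D : ℝ)/δ * ((D : ℝ) * B)⁻¹) • w, h⟫‖
      = ‖(δ^D * B)⁻¹ * ∫ v, (Kh v - K0 v - lin v) ∂μ.toSphere‖ := by rw [← hsplit]
    _ = (δ^D * B)⁻¹ * ‖∫ v, (Kh v - K0 v - lin v) ∂μ.toSphere‖ := by
        rw [norm_mul, Real.norm_eq_abs, abs_of_pos (by positivity)]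
    _ ≤ (δ^D * B)⁻¹ * (ε₀ * ‖h‖ * ((D : ℝ) * B)) := by
        rw [hSuniv] at hintbound
        exact mul_le_mul_of_nonneg_left hintbound (by positivity)
    _ ≤ c * ‖h‖ := by
        rw [hε₀def]
        rw [show (δ^D * B)⁻¹ * (c * (δ^D * B) / ((D : ℝ) * B + 1) * ‖h‖ * ((D : ℝ) * B))
          = c * ‖h‖ * (((D : ℝ) * B) / ((D : ℝ) * B + 1)) from by field_simp]
        have h1 : ((D : ℝ) * B) / ((D : ℝ) * B + 1) ≤ 1 := by
          rw [div_le_one (by positivity)]; linarith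
        exact mul_le_of_le_one_right (mul_nonneg hc.le (norm_nonneg h)) h1

end



open MeasureTheory

/-- SPSA/one-point gradient estimation identity: the smoothed function
`f̂(x) = ⨍_{B̄(x,δ)} f` is differentiable with gradient
`(d/δ) · E_{λ ∼ Unif(S^{d-1})}[f(x + δλ) λ]`. -/
theorem stmt_16 (d : ℕ) (hd : 2 ≤ d)
    (f : EuclideanSpace ℝ (Fin d) → ℝ)
    (hf_cont : Continuous f) (hf_bdd : ∃ M : ℝ, ∀ x, |f x| ≤ M)
    (δ : ℝ) (hδ : 0 < δ)
    (fhat : EuclideanSpace ℝ (Fin d) → ℝ)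
    (hfhat : ∀ x, fhat x = ⨍ y in Metric.closedBall x δ, f y) :
    ∀ x : EuclideanSpace ℝ (Fin d),
      HasGradientAt fhat
        (((d : ℝ) / δ) •
          ⨍ v : Metric.sphere (0 : EuclideanSpace ℝ (Fin d)) 1,
            f (x + δ • (v : EuclideanSpace ℝ (Fin d))) • (v : EuclideanSpace ℝ (Fin d))
              ∂((volume : Measure (EuclideanSpace ℝ (Fin d))).toSphere)) x := by
  obtain ⟨M, hM⟩ := hf_bdd
  intro x
  haveI : Nonempty (Fin d) := ⟨⟨0, by omega⟩⟩
  have hfin : ((Module.finrank ℝ (EuclideanSpace ℝ (Fin d)) : ℕ) : ℝ) = (d : ℝ) := by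
    rw [finrank_euclideanSpace_fin]
  have hmain := main_aux (volume : Measure (EuclideanSpace ℝ (Fin d))) hf_cont hM hδ x
  have hfun : fhat = fun c => ⨍ y in Metric.closedBall c δ, f y := funext hfhat
  rw [hfun, ← hfin]
  exact hmain
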